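/- Let k be an algebraically closed field and let R be a (possibly noncommutative, unital, associative) k-algebra in which every element is algebraic over k (for example, R finite dimensional over k). Then the map f ↦ f⁻¹(0) is a bijection from the set of morphisms of partial k-algebras f : R → k onto the set of prime partial ideals of R. -/

import Mathlib

/-- A partial ideal of a (possibly noncommutative) ring `R`: a subset whose intersection
with every commutative subring is an ideal of that subring; elementwise, it contains `0`,
is closed under sums of commuting members, and absorbs products by commuting elements. -/
def IsPartialIdeal {R : Type*} [Ring R] (I : Set R) : Prop :=
  (0 : R) ∈ I ∧
  (∀ a b : R, a * b = b * a → a ∈ I → b ∈ I → a + b ∈ I) ∧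
  (∀ a b : R, a * b = b * a → b ∈ I → a * b ∈ I)

/-- A prime partial ideal: a proper partial ideal `P` such that for commuting `x, y`,
`x * y ∈ P` implies `x ∈ P` or `y ∈ P`. -/
def IsPrimePartialIdeal {R : Type*} [Ring R] (P : Set R) : Prop :=
  IsPartialIdeal P ∧ P ≠ Set.univ ∧
  ∀ x y : R, x * y = y * x → x * y ∈ P → x ∈ P ∨ y ∈ P

/-- A morphism of partial `k`-algebras from a (possibly noncommutative) `k`-algebra `R`
to `k`. -/
def IsPartialAlgHom (k : Type*) {R : Type*} [CommRing k] [Ring R] [Algebra k R]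
    (f : R → k) : Prop :=
  f 0 = 0 ∧ f 1 = 1 ∧
  (∀ (c : k) (a : R), f (c • a) = c * f a) ∧
  (∀ a b : R, a * b = b * a → f (a + b) = f a + f b) ∧
  (∀ a b : R, a * b = b * a → f (a * b) = f a * f b)

section Aux

variable {k : Type*} [Field k] {R : Type*} [Ring R] [Algebra k R]

private lemma ppi_eq_univ_of_one_mem {P : Set R} (hP : IsPartialIdeal P)
    (h1 : (1 : R) ∈ P) : P = Set.univ := by
  ext x
  simp only [Set.mem_univ, iff_true]
  have := hP.2.2 x 1 (by rw [mul_one, one_mul]) h1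
  rwa [mul_one] at this

private lemma ppi_one_not_mem {P : Set R} (hP : IsPrimePartialIdeal P) : (1 : R) ∉ P :=
  fun h => hP.2.1 (ppi_eq_univ_of_one_mem hP.1 h)

private lemma ppi_algebraMap_mul_mem {P : Set R} (hP : IsPartialIdeal P) (c : k) {x : R}
    (hx : x ∈ P) : algebraMap k R c * x ∈ P :=
  hP.2.2 _ _ (Algebra.commutes c x) hx

private lemma ppi_neg_mem {P : Set R} (hP : IsPartialIdeal P) {x : R} (hx : x ∈ P) :
    -x ∈ P := by
  have := hP.2.2 (-1) x (by rw [neg_one_mul, mul_neg_one]) hx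
  rwa [neg_one_mul] at this

private lemma commute_sub_algebraMap {r s : R} (h : Commute r s) (l m : k) :
    Commute (r - algebraMap k R l) (s - algebraMap k R m) :=
  (h.sub_right (Algebra.commute_algebraMap_right m r)).sub_left
    ((Algebra.commute_algebraMap_left l s).sub_right
      (Algebra.commute_algebraMap_left l _))

/-- uniqueness of the "eigenvalue" -/
private lemma ppi_unique {P : Set R} (hP : IsPrimePartialIdeal P) {r : R} {l m : k}
    (hl : r - algebraMap k R l ∈ P) (hm : r - algebraMap k R m ∈ P) : l = m := by
  by_contra hne
  have hneg : -(r - algebraMap k R m) ∈ P := ppi_neg_mem hP.1 hm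
  have hcomm : (r - algebraMap k R l) * -(r - algebraMap k R m) =
      -(r - algebraMap k R m) * (r - algebraMap k R l) :=
    ((commute_sub_algebraMap (Commute.refl r) l m).neg_right).eq
  have hsum : (r - algebraMap k R l) + -(r - algebraMap k R m) ∈ P :=
    hP.1.2.1 _ _ hcomm hl hneg
  have heq : (r - algebraMap k R l) + -(r - algebraMap k R m) =
      algebraMap k R (m - l) := by
    rw [map_sub]; abel
  rw [heq] at hsum
  have h1 := ppi_algebraMap_mul_mem hP.1 (m - l)⁻¹ hsum
  rw [← map_mul, inv_mul_cancel₀ (sub_ne_zero.mpr fun h => hne h.symm), map_one] at h1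
  exact ppi_one_not_mem hP h1

private lemma commute_prod (r : R) (s : List k) :
    Commute r ((s.map fun a => r - algebraMap k R a).prod) := by
  induction s with
  | nil => simp
  | cons a t ih =>
    rw [List.map_cons, List.prod_cons]
    exact ((Commute.refl r).sub_right (Algebra.commute_algebraMap_right a r)).mul_right ih

private lemma ppi_factor_mem {P : Set R} (hP : IsPrimePartialIdeal P) (r : R)
    (s : List k) (h : (s.map fun a => r - algebraMap k R a).prod ∈ P) :
    ∃ a ∈ s, r - algebraMap k R a ∈ P := by
  induction s with
  | nil =>
    simp only [List.map_nil, List.prod_nil] at h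
    exact absurd h (ppi_one_not_mem hP)
  | cons a t ih =>
    rw [List.map_cons, List.prod_cons] at h
    have hcomm : (r - algebraMap k R a) * (t.map fun b => r - algebraMap k R b).prod =
        (t.map fun b => r - algebraMap k R b).prod * (r - algebraMap k R a) :=
      ((commute_prod r t).sub_left (Algebra.commute_algebraMap_left a _)).eq
    rcases hP.2.2 _ _ hcomm h with h1 | h2
    · exact ⟨a, List.mem_cons_self, h1⟩
    · obtain ⟨b, hb, hbP⟩ := ih h2
      exact ⟨b, List.mem_cons_of_mem a hb, hbP⟩

private lemma ppi_exists {P : Set R} [IsAlgClosed k] (hP : IsPrimePartialIdeal P)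
    (r : R) (halg : IsAlgebraic k r) : ∃ l : k, r - algebraMap k R l ∈ P := by
  obtain ⟨p, hp0, hpr⟩ := halg
  have hsplit : p.Splits := IsAlgClosed.splits p
  have hfac := hsplit.eq_prod_roots
  have hlist : (p.roots.map fun a => Polynomial.X - Polynomial.C a).prod =
      (p.roots.toList.map fun a => Polynomial.X - Polynomial.C a).prod := by
    conv_lhs => rw [← Multiset.coe_toList p.roots]
    rw [Multiset.map_coe, Multiset.prod_coe]
  rw [hlist] at hfac
  have h0 : (Polynomial.aeval r) p = 0 := hpr
  rw [hfac, map_mul, Polynomial.aeval_C] at h0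
  rw [show (Polynomial.aeval r)
        ((p.roots.toList.map fun a => Polynomial.X - Polynomial.C a).prod) =
      (p.roots.toList.map fun a => r - algebraMap k R a).prod by
    rw [map_list_prod, List.map_map]
    congr 1
    ext a
    simp] at h0
  have hQ : (p.roots.toList.map fun a => r - algebraMap k R a).prod = 0 := by
    have hlc : p.leadingCoeff ≠ 0 := Polynomial.leadingCoeff_ne_zero.mpr hp0
    have h1 := congrArg (fun x => algebraMap k R p.leadingCoeff⁻¹ * x) h0
    simpa [← mul_assoc, ← map_mul, inv_mul_cancel₀ hlc] using h1
  have hmem : (p.roots.toList.map fun a => r - algebraMap k R a).prod ∈ P := by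
    rw [hQ]; exact hP.1.1
  obtain ⟨a, _, ha⟩ := ppi_factor_mem hP r p.roots.toList hmem
  exact ⟨a, ha⟩

end Aux

/-- Over an algebraically closed field `k`, for an algebraic `k`-algebra `R`, the map
`f ↦ f⁻¹(0)` is a bijection from the set of morphisms of partial `k`-algebras `R → k`
onto the set of prime partial ideals of `R`. -/
theorem partialAlgHom_equiv_primePartialIdeals {k : Type*} [Field k] [IsAlgClosed k]
    {R : Type*} [Ring R] [Algebra k R] (halg : ∀ r : R, IsAlgebraic k r) :
    Set.BijOn (fun f : R → k => f ⁻¹' {0})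
      {f : R → k | IsPartialAlgHom k f} {P : Set R | IsPrimePartialIdeal P} := by
  refine ⟨?_, ?_, ?_⟩
  · -- MapsTo
    rintro f ⟨h0, h1, hsmul, hadd, hmul⟩
    refine ⟨⟨?_, ?_, ?_⟩, ?_, ?_⟩
    · simpa using h0
    · intro a b hab ha hb
      simp only [Set.mem_preimage, Set.mem_singleton_iff] at *
      rw [hadd a b hab, ha, hb, add_zero]
    · intro a b hab hb
      simp only [Set.mem_preimage, Set.mem_singleton_iff] at *
      rw [hmul a b hab, hb, mul_zero]
    · intro h
      have h2 : f 1 = 0 := by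
        have := h ▸ Set.mem_univ (1 : R)
        simpa using this
      rw [h1] at h2
      exact one_ne_zero h2
    · intro x y hxy hP
      simp only [Set.mem_preimage, Set.mem_singleton_iff] at *
      rw [hmul x y hxy] at hP
      exact mul_eq_zero.mp hP
  · -- InjOn
    rintro f ⟨hf0, hf1, hfsmul, hfadd, hfmul⟩ g ⟨hg0, hg1, hgsmul, hgadd, hgmul⟩ h
    have h' : f ⁻¹' {0} = g ⁻¹' {0} := h
    funext r
    have hcomm : r * ((-f r) • (1 : R)) = ((-f r) • (1 : R)) * r := by
      rw [mul_smul_comm, smul_mul_assoc, mul_one, one_mul]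
    have hfz : f (r + (-f r) • 1) = 0 := by
      rw [hfadd _ _ hcomm, hfsmul, hf1, mul_one, add_neg_cancel]
    have hmem : r + (-f r) • 1 ∈ g ⁻¹' {0} := by rw [← h']; exact hfz
    have hgz : g (r + (-f r) • 1) = 0 := hmem
    rw [hgadd _ _ hcomm, hgsmul, hg1, mul_one] at hgz
    have : g r - f r = 0 := by rwa [sub_eq_add_neg]
    exact (sub_eq_zero.mp this).symm
  · -- SurjOn
    rintro P hP
    have hP' : IsPrimePartialIdeal P := hP
    have hex : ∀ r : R, ∃ l : k, r - algebraMap k R l ∈ P :=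
      fun r => ppi_exists hP' r (halg r)
    set f : R → k := fun r => Classical.choose (hex r) with hf
    have hspec : ∀ r : R, r - algebraMap k R (f r) ∈ P :=
      fun r => Classical.choose_spec (hex r)
    have huniq : ∀ (r : R) (l : k), r - algebraMap k R l ∈ P → f r = l :=
      fun r l hl => ppi_unique hP' (hspec r) hl
    have hf0 : f 0 = 0 := huniq 0 0 (by simpa using hP'.1.1)
    have hf1 : f 1 = 1 := huniq 1 1 (by simpa using hP'.1.1)
    have hfsmul : ∀ (c : k) (a : R), f (c • a) = c * f a := by
      intro c a
      refine huniq _ _ ?_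
      have heq : c • a - algebraMap k R (c * f a) =
          algebraMap k R c * (a - algebraMap k R (f a)) := by
        rw [mul_sub, ← map_mul, Algebra.smul_def]
      rw [heq]
      exact ppi_algebraMap_mul_mem hP'.1 c (hspec a)
    have hfadd : ∀ a b : R, a * b = b * a → f (a + b) = f a + f b := by
      intro a b hab
      refine huniq _ _ ?_
      have heq : (a + b) - algebraMap k R (f a + f b) =
          (a - algebraMap k R (f a)) + (b - algebraMap k R (f b)) := by
        rw [map_add]; abel
      rw [heq]
      exact hP'.1.2.1 _ _ (commute_sub_algebraMap hab (f a) (f b)).eq (hspec a) (hspec b)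
    have hfmul : ∀ a b : R, a * b = b * a → f (a * b) = f a * f b := by
      intro a b hab
      refine huniq _ _ ?_
      have heq : a * b - algebraMap k R (f a * f b) =
          (a - algebraMap k R (f a)) * b +
            algebraMap k R (f a) * (b - algebraMap k R (f b)) := by
        rw [map_mul]; noncomm_ring
      rw [heq]
      have hba : Commute b a := hab.symm
      have hc : Commute b (a - algebraMap k R (f a)) :=
        hba.sub_right (Algebra.commute_algebraMap_right (f a) b)
      have ht1 : (a - algebraMap k R (f a)) * b ∈ P := by
        have := hP'.1.2.2 b _ hc.eq (hspec a)
        rwa [hc.eq] at this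
      have ht2 : algebraMap k R (f a) * (b - algebraMap k R (f b)) ∈ P :=
        ppi_algebraMap_mul_mem hP'.1 (f a) (hspec b)
      refine hP'.1.2.1 _ _ ?_ ht1 ht2
      have c1 : Commute (a - algebraMap k R (f a)) (b - algebraMap k R (f b)) :=
        commute_sub_algebraMap hab (f a) (f b)
      have c2 : Commute b (b - algebraMap k R (f b)) :=
        (Commute.refl b).sub_right (Algebra.commute_algebraMap_right (f b) b)
      exact ((Algebra.commute_algebraMap_right (f a)
        ((a - algebraMap k R (f a)) * b)).mul_right (c1.mul_left c2)).eq
    refine ⟨f, ⟨hf0, hf1, hfsmul, hfadd, hfmul⟩, ?_⟩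
    ext r
    simp only [Set.mem_preimage, Set.mem_singleton_iff]
    constructor
    · intro hr
      have := hspec r
      rwa [hr, map_zero, sub_zero] at this
    · intro hr
      exact huniq r 0 (by simpa using hr)
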